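/- Let X be a conditionally monotone σ-complete ordered vector space admitting a faithful normal positive linear functional f. Then X is monotone order separable. -/

import Mathlib

universe u

/-- A net `x`, indexed by a set with relation `r`, *order converges* to `l` in a poset if it is
squeezed between an increasing net with supremum `l` and a decreasing net with infimum `l`. -/
def OrderConvNet {ι P : Type*} (r : ι → ι → Prop) [Preorder P] (x : ι → P) (l : P) : Prop :=
  ∃ y z : ι → P,
    (∀ i j, r i j → y i ≤ y j) ∧ (∀ i j, r i j → z j ≤ z i) ∧
    (∀ i, y i ≤ x i ∧ x i ≤ z i) ∧
    IsLUB (Set.range y) l ∧ IsGLB (Set.range z) l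

/-- The `atTop` filter of a directed index set given by the relation `r`. -/
def netAtTop {ι : Type*} (r : ι → ι → Prop) : Filter ι :=
  ⨅ i, Filter.principal {j | r i j}

/-- A poset is *monotone order separable* if every increasing net having a supremum admits an
increasing sequence of indices along which the supremum is the same, and dually for decreasing
nets and infima. -/
def MonotoneOrderSeparable (P : Type u) [Preorder P] : Prop :=
  ∀ (ι : Type u) (r : ι → ι → Prop), IsPreorder ι r → IsDirected ι r → Nonempty ι →
    ∀ (x : ι → P) (l : P),
      ((∀ i j, r i j → x i ≤ x j) → IsLUB (Set.range x) l →
        ∃ γ : ℕ → ι, (∀ m n, m ≤ n → r (γ m) (γ n)) ∧ IsLUB (Set.range (x ∘ γ)) l) ∧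
      ((∀ i j, r i j → x j ≤ x i) → IsGLB (Set.range x) l →
        ∃ γ : ℕ → ι, (∀ m n, m ≤ n → r (γ m) (γ n)) ∧ IsGLB (Set.range (x ∘ γ)) l)

/-- From a net of reals tending to `0` along `netAtTop r`, extract a monotone sequence of
indices along which the values are small. -/
lemma extract_seq {ι : Type u} (r : ι → ι → Prop) (hp : IsPreorder ι r)
    (hd : IsDirected ι r) (hne : Nonempty ι) (g : ι → ℝ)
    (ht : Filter.Tendsto g (netAtTop r) (nhds 0)) :
    ∃ γ : ℕ → ι, (∀ m n, m ≤ n → r (γ m) (γ n)) ∧ ∀ n : ℕ, |g (γ n)| < 1 / (n + 1) := by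
  haveI := hp; haveI := hd; haveI := hne
  have hdirF : Directed (· ≥ ·) (fun i => Filter.principal {j | r i j}) := by
    intro i₁ i₂
    obtain ⟨k, hk1, hk2⟩ := directed_of r i₁ i₂
    refine ⟨k, ?_, ?_⟩ <;>
      · simp only [ge_iff_le, Filter.principal_mono]
        intro j hj
        exact _root_.trans_of r (by assumption) hj
  have key : ∀ n : ℕ, ∃ i, ∀ j, r i j → |g j| < 1 / (n + 1) := by
    intro n
    have hε : (0 : ℝ) < 1 / (n + 1) := by positivity
    have := Metric.tendsto_nhds.mp ht (1 / (n + 1)) hε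
    rw [Filter.Eventually, netAtTop, Filter.mem_iInf_of_directed hdirF] at this
    obtain ⟨i, hi⟩ := this
    refine ⟨i, fun j hj => ?_⟩
    have := hi hj
    simpa [Real.dist_eq] using this
  choose i hi using key
  let γ : ℕ → ι := fun n => Nat.rec (i 0) (fun n p => (directed_of r p (i (n + 1))).choose) n
  have hstep : ∀ n, r (γ n) (γ (n + 1)) ∧ r (i (n + 1)) (γ (n + 1)) := fun n =>
    (directed_of r (γ n) (i (n + 1))).choose_spec
  have hr0 : ∀ n, r (i n) (γ n) := by
    intro n
    cases n with
    | zero => exact _root_.refl_of r _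
    | succ k => exact (hstep k).2
  refine ⟨γ, ?_, fun n => hi n _ (hr0 n)⟩
  intro m n hmn
  induction n, hmn using Nat.le_induction with
  | base => exact _root_.refl_of r _
  | succ k hk ih => exact _root_.trans_of r ih (hstep k).1

/-- A conditionally monotone σ-complete ordered vector space admitting a faithful normal positive
linear functional is monotone order separable. -/
theorem stmt4 {X : Type u} [AddCommGroup X] [PartialOrder X] [IsOrderedAddMonoid X] [Module ℝ X] [PosSMulStrictMono ℝ X] [PosSMulReflectLT ℝ X]
    (hσsup : ∀ x : ℕ → X, Monotone x → (∃ b, ∀ n, x n ≤ b) → ∃ l, IsLUB (Set.range x) l)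
    (hσinf : ∀ x : ℕ → X, Antitone x → (∃ b, ∀ n, b ≤ x n) → ∃ l, IsGLB (Set.range x) l)
    (f : X →ₗ[ℝ] ℝ)
    (hpos : ∀ x : X, 0 ≤ x → 0 ≤ f x)
    (hfaithful : ∀ x : X, 0 ≤ x → x ≠ 0 → 0 < f x)
    (hnormal : ∀ (ι : Type u) (r : ι → ι → Prop), IsPreorder ι r → IsDirected ι r → Nonempty ι →
      ∀ x : ι → X, (∀ i j, r i j → x j ≤ x i) → IsGLB (Set.range x) 0 →
        Filter.Tendsto (fun γ => f (x γ)) (netAtTop r) (nhds 0)) :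
    MonotoneOrderSeparable X := by
  intro ι r hp hd hne x l
  constructor
  · -- increasing net with supremum l
    intro hx hlub
    set z : ι → X := fun i => l - x i with hz
    have hzanti : ∀ i j, r i j → z j ≤ z i := fun i j hij =>
      sub_le_sub_left (hx i j hij) l
    have hzglb : IsGLB (Set.range z) 0 := by
      constructor
      · rintro _ ⟨i, rfl⟩
        exact sub_nonneg.2 (hlub.1 ⟨i, rfl⟩)
      · intro b hb
        have h1 : l ≤ l - b := hlub.2 (by
          rintro _ ⟨i, rfl⟩
          exact le_sub_comm.mp (hb ⟨i, rfl⟩))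
        exact (le_sub_self_iff l).mp h1
    have ht := hnormal ι r hp hd hne z hzanti hzglb
    obtain ⟨γ, hγmono, hγsmall⟩ := extract_seq r hp hd hne (fun i => f (z i)) ht
    have hxmono : Monotone (x ∘ γ) := fun m n hmn => hx _ _ (hγmono m n hmn)
    obtain ⟨m, hm⟩ := hσsup (x ∘ γ) hxmono ⟨l, fun n => hlub.1 ⟨γ n, rfl⟩⟩
    have hml : m ≤ l := hm.2 (by rintro _ ⟨n, rfl⟩; exact hlub.1 ⟨γ n, rfl⟩)
    have hlm : l - m = 0 := by
      by_contra h
      have hεpos : 0 < f (l - m) := hfaithful _ (sub_nonneg.2 hml) h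
      obtain ⟨n, hn⟩ := exists_nat_one_div_lt hεpos
      have h1 : f (l - m) ≤ f (z (γ n)) := by
        have : (0 : ℝ) ≤ f (z (γ n) - (l - m)) := by
          apply hpos
          have hle : x (γ n) ≤ m := hm.1 ⟨n, rfl⟩
          have heq : z (γ n) - (l - m) = m - x (γ n) := by simp only [hz]; abel
          rw [heq]
          exact sub_nonneg.2 hle
        rw [map_sub] at this
        linarith
      have h2 : f (z (γ n)) < 1 / (n + 1) := lt_of_le_of_lt (le_abs_self _) (hγsmall n)
      linarith
    have : m = l := (sub_eq_zero.mp hlm).symm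
    exact ⟨γ, hγmono, this ▸ hm⟩
  · -- decreasing net with infimum l
    intro hx hglb
    set z : ι → X := fun i => x i - l with hz
    have hzanti : ∀ i j, r i j → z j ≤ z i := fun i j hij =>
      sub_le_sub_right (hx i j hij) l
    have hzglb : IsGLB (Set.range z) 0 := by
      constructor
      · rintro _ ⟨i, rfl⟩
        exact sub_nonneg.2 (hglb.1 ⟨i, rfl⟩)
      · intro b hb
        have h1 : b + l ≤ l := hglb.2 (by
          rintro _ ⟨i, rfl⟩
          exact le_sub_iff_add_le.mp (hb ⟨i, rfl⟩))
        exact add_le_iff_nonpos_left.mp h1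
    have ht := hnormal ι r hp hd hne z hzanti hzglb
    obtain ⟨γ, hγmono, hγsmall⟩ := extract_seq r hp hd hne (fun i => f (z i)) ht
    have hxanti : Antitone (x ∘ γ) := fun m n hmn => hx _ _ (hγmono m n hmn)
    obtain ⟨m, hm⟩ := hσinf (x ∘ γ) hxanti ⟨l, fun n => hglb.1 ⟨γ n, rfl⟩⟩
    have hml : l ≤ m := hm.2 (by rintro _ ⟨n, rfl⟩; exact hglb.1 ⟨γ n, rfl⟩)
    have hlm : m - l = 0 := by
      by_contra h
      have hεpos : 0 < f (m - l) := hfaithful _ (sub_nonneg.2 hml) h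
      obtain ⟨n, hn⟩ := exists_nat_one_div_lt hεpos
      have h1 : f (m - l) ≤ f (z (γ n)) := by
        have : (0 : ℝ) ≤ f (z (γ n) - (m - l)) := by
          apply hpos
          have hle : m ≤ x (γ n) := hm.1 ⟨n, rfl⟩
          have heq : z (γ n) - (m - l) = x (γ n) - m := by simp only [hz]; abel
          rw [heq]
          exact sub_nonneg.2 hle
        rw [map_sub] at this
        linarith
      have h2 : f (z (γ n)) < 1 / (n + 1) := lt_of_le_of_lt (le_abs_self _) (hγsmall n)
      linarith
    have : m = l := sub_eq_zero.mp hlm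
    exact ⟨γ, hγmono, this ▸ hm⟩
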